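/- With the parameterized unit vectors |ψ(θ)⟩ as above (generators of unit norm), if ⟨ψ(θ)|ψ(θ')⟩ = -1 then the parameters satisfy ‖θ - θ'‖_1 ≥ 2. -/

import Mathlib

open NormedSpace

section Aux

/-- A product of elements of norm at most one has norm at most one
(in a normed ring where `‖1‖ ≤ 1`). -/
lemma aux_list_prod_norm_le {R : Type*} [NormedRing R] (h1 : ‖(1 : R)‖ ≤ 1) :
    ∀ (l : List R), (∀ a ∈ l, ‖a‖ ≤ 1) → ‖l.prod‖ ≤ 1
  | [], _ => by simpa using h1
  | a :: l, h => by
      rw [List.prod_cons]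
      calc ‖a * l.prod‖ ≤ ‖a‖ * ‖l.prod‖ := norm_mul_le _ _
        _ ≤ 1 * 1 := by
            have ha : ‖a‖ ≤ 1 := h a (List.mem_cons_self)
            have hl : ‖l.prod‖ ≤ 1 :=
              aux_list_prod_norm_le h1 l fun b hb => h b (List.mem_cons_of_mem _ hb)
            exact mul_le_mul ha hl (norm_nonneg _) zero_le_one
        _ = 1 := one_mul 1

lemma aux_prod_norm_le {R : Type*} [NormedRing R] (h1 : ‖(1 : R)‖ ≤ 1)
    (n : ℕ) (f : Fin n → R) (hf : ∀ i, ‖f i‖ ≤ 1) :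
    ‖((List.ofFn f).reverse).prod‖ ≤ 1 := by
  refine aux_list_prod_norm_le h1 _ fun a ha => ?_
  rw [List.mem_reverse, List.mem_ofFn] at ha
  obtain ⟨i, rfl⟩ := ha
  exact hf i

/-- Telescoping bound for a difference of products. -/
lemma aux_prod_sub_norm_le {R : Type*} [NormedRing R] (h1 : ‖(1 : R)‖ ≤ 1) :
    ∀ (n : ℕ) (f g : Fin n → R), (∀ i, ‖f i‖ ≤ 1) → (∀ i, ‖g i‖ ≤ 1) →
      ‖((List.ofFn f).reverse).prod - ((List.ofFn g).reverse).prod‖ ≤ ∑ i, ‖f i - g i‖ := by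
  intro n
  induction n with
  | zero => intro f g _ _; simp
  | succ m ih =>
    intro f g hf hg
    rw [List.ofFn_succ, List.ofFn_succ, List.reverse_cons, List.reverse_cons,
        List.prod_append, List.prod_append]
    simp only [List.prod_cons, List.prod_nil, mul_one]
    set Pf := ((List.ofFn (fun i => f i.succ)).reverse).prod with hPf
    set Pg := ((List.ofFn (fun i => g i.succ)).reverse).prod with hPg
    have key : Pf * f 0 - Pg * g 0 = Pf * (f 0 - g 0) + (Pf - Pg) * g 0 := by
      rw [mul_sub, sub_mul]; abel
    have hPf1 : ‖Pf‖ ≤ 1 := aux_prod_norm_le h1 m _ fun i => hf i.succ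
    have hg0 : ‖g 0‖ ≤ 1 := hg 0
    have hihs : ‖Pf - Pg‖ ≤ ∑ i : Fin m, ‖f i.succ - g i.succ‖ :=
      ih (fun i => f i.succ) (fun i => g i.succ) (fun i => hf i.succ) (fun i => hg i.succ)
    calc ‖Pf * f 0 - Pg * g 0‖
        ≤ ‖Pf * (f 0 - g 0)‖ + ‖(Pf - Pg) * g 0‖ := by rw [key]; exact norm_add_le _ _
      _ ≤ ‖Pf‖ * ‖f 0 - g 0‖ + ‖Pf - Pg‖ * ‖g 0‖ := by
            exact add_le_add (norm_mul_le _ _) (norm_mul_le _ _)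
      _ ≤ 1 * ‖f 0 - g 0‖ + (∑ i : Fin m, ‖f i.succ - g i.succ‖) * 1 := by
            refine add_le_add (mul_le_mul_of_nonneg_right hPf1 (norm_nonneg _)) ?_
            exact mul_le_mul hihs hg0 (norm_nonneg _)
              (Finset.sum_nonneg fun i _ => norm_nonneg _)
      _ = ∑ i : Fin (m + 1), ‖f i - g i‖ := by
            rw [one_mul, mul_one, Fin.sum_univ_succ]

variable {E : Type*} [NormedAddCommGroup E] [InnerProductSpace ℂ E] [CompleteSpace E]

/-- `exp (t • A)` is an isometry for skew-adjoint `A`. -/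
lemma aux_exp_skew_isometry (A : E →L[ℂ] E)
    (hskew : ContinuousLinearMap.adjoint A = -A) (t : ℝ) (x : E) :
    ‖exp ((t : ℂ) • A) x‖ = ‖x‖ := by
  set U : E →L[ℂ] E := exp ((t : ℂ) • A) with hU
  have hadj : ContinuousLinearMap.adjoint U = exp (-((t : ℂ) • A)) := by
    rw [← ContinuousLinearMap.star_eq_adjoint, hU, star_exp]
    congr 1
    rw [star_smul, ContinuousLinearMap.star_eq_adjoint, hskew]
    simp [smul_neg]
  have hmul : exp (-((t : ℂ) • A)) * U = 1 := by
    rw [hU, ← exp_add_of_commute_of_mem_ball (𝕂 := ℂ) ((Commute.refl ((t : ℂ) • A)).neg_left)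
        ((expSeries_radius_eq_top ℂ (E →L[ℂ] E)).symm ▸ edist_lt_top _ _)
        ((expSeries_radius_eq_top ℂ (E →L[ℂ] E)).symm ▸ edist_lt_top _ _),
      neg_add_cancel, exp_zero]
  have h1 : (inner ℂ (U x) (U x) : ℂ) = inner ℂ x x := by
    rw [← ContinuousLinearMap.adjoint_inner_left U x (U x), hadj]
    have : exp (-((t : ℂ) • A)) (U x) = x := by
      have := congrArg (fun (T : E →L[ℂ] E) => T x) hmul
      simpa [ContinuousLinearMap.mul_apply] using this
    rw [this]
  have h2 : ‖U x‖ ^ 2 = ‖x‖ ^ 2 := by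
    have := congrArg (RCLike.re (K := ℂ)) h1
    rwa [inner_self_eq_norm_sq (𝕜 := ℂ), inner_self_eq_norm_sq (𝕜 := ℂ)] at this
  calc ‖U x‖ = √(‖U x‖ ^ 2) := (Real.sqrt_sq (norm_nonneg _)).symm
    _ = √(‖x‖ ^ 2) := by rw [h2]
    _ = ‖x‖ := Real.sqrt_sq (norm_nonneg _)

lemma aux_exp_skew_norm_le (A : E →L[ℂ] E)
    (hskew : ContinuousLinearMap.adjoint A = -A) (t : ℝ) :
    ‖exp ((t : ℂ) • A)‖ ≤ 1 := by
  refine ContinuousLinearMap.opNorm_le_bound _ zero_le_one fun x => ?_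
  rw [aux_exp_skew_isometry A hskew t x, one_mul]

/-- Lipschitz bound for `t ↦ exp (t • A)` for skew-adjoint `A` of norm at most one. -/
lemma aux_exp_skew_lipschitz (A : E →L[ℂ] E)
    (hskew : ContinuousLinearMap.adjoint A = -A) (hA : ‖A‖ ≤ 1) (s t : ℝ) :
    ‖exp ((s : ℂ) • A) - exp ((t : ℂ) • A)‖ ≤ |s - t| := by
  have hderiv : ∀ u : ℝ, HasDerivAt (fun v : ℝ => exp ((v : ℂ) • A))
      (exp ((u : ℂ) • A) * A) u := by
    intro u
    have h : HasDerivAt (fun v : ℝ => exp (v • A)) (exp (u • A) * A) u :=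
      hasDerivAt_exp_smul_const A u
    simpa [Complex.coe_smul] using h
  have hbound : ∀ u : ℝ, ‖exp ((u : ℂ) • A) * A‖ ≤ 1 := fun u =>
    le_trans (norm_mul_le _ _)
      (mul_le_one₀ (aux_exp_skew_norm_le A hskew u) (norm_nonneg _) hA)
  have := Convex.norm_image_sub_le_of_norm_hasDerivWithin_le
    (f := fun v : ℝ => exp ((v : ℂ) • A)) (f' := fun u => exp ((u : ℂ) • A) * A)
    (C := 1) (s := Set.univ)
    (fun u _ => (hderiv u).hasDerivWithinAt) (fun u _ => hbound u)
    convex_univ (Set.mem_univ t) (Set.mem_univ s)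
  simpa [Real.norm_eq_abs] using this

end Aux

open NormedSpace in
/-- With `|ψ(θ)⟩ = Πⱼ exp(Aⱼ θⱼ)|ψ₀⟩` (skew-Hermitian generators of unit norm,
`ψ₀` a unit vector), if `⟨ψ(θ)|ψ(θ')⟩ = -1` then `‖θ - θ'‖₁ ≥ 2`. -/
theorem overlap_neg_one_implies_param_one_norm_ge_two
    {E : Type*} [NormedAddCommGroup E] [InnerProductSpace ℂ E] [CompleteSpace E]
    (n : ℕ) (A : Fin n → (E →L[ℂ] E))
    (hskew : ∀ j, ContinuousLinearMap.adjoint (A j) = -(A j))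
    (hnorm : ∀ j, ‖A j‖ = 1)
    (ψ₀ : E) (hψ₀ : ‖ψ₀‖ = 1)
    (θ θ' : Fin n → ℝ)
    (ψ : (Fin n → ℝ) → E)
    (hψ : ∀ ϑ : Fin n → ℝ,
      ψ ϑ = (((List.ofFn fun j => exp ((ϑ j : ℂ) • A j)).reverse).prod) ψ₀)
    (hoverlap : inner (𝕜 := ℂ) (ψ θ) (ψ θ') = (-1 : ℂ)) :
    2 ≤ ∑ j : Fin n, |θ j - θ' j| := by
  have h1 : ‖(1 : E →L[ℂ] E)‖ ≤ 1 := ContinuousLinearMap.norm_id_le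
  set f : Fin n → (E →L[ℂ] E) := fun j => exp ((θ j : ℂ) • A j) with hf
  set g : Fin n → (E →L[ℂ] E) := fun j => exp ((θ' j : ℂ) • A j) with hg
  have hfle : ∀ j, ‖f j‖ ≤ 1 := fun j => aux_exp_skew_norm_le (A j) (hskew j) (θ j)
  have hgle : ∀ j, ‖g j‖ ≤ 1 := fun j => aux_exp_skew_norm_le (A j) (hskew j) (θ' j)
  -- upper bound on the distance of the two states
  have hdist : ‖ψ θ - ψ θ'‖ ≤ ∑ j : Fin n, |θ j - θ' j| := by
    rw [hψ θ, hψ θ']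
    calc ‖((List.ofFn f).reverse).prod ψ₀ - ((List.ofFn g).reverse).prod ψ₀‖
        = ‖(((List.ofFn f).reverse).prod - ((List.ofFn g).reverse).prod) ψ₀‖ := by
          rw [ContinuousLinearMap.sub_apply]
      _ ≤ ‖((List.ofFn f).reverse).prod - ((List.ofFn g).reverse).prod‖ * ‖ψ₀‖ :=
          ContinuousLinearMap.le_opNorm _ _
      _ = ‖((List.ofFn f).reverse).prod - ((List.ofFn g).reverse).prod‖ := by
          rw [hψ₀, mul_one]
      _ ≤ ∑ j, ‖f j - g j‖ := aux_prod_sub_norm_le h1 n f g hfle hgle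
      _ ≤ ∑ j : Fin n, |θ j - θ' j| := by
          refine Finset.sum_le_sum fun j _ => ?_
          exact aux_exp_skew_lipschitz (A j) (hskew j) (le_of_eq (hnorm j)) (θ j) (θ' j)
  -- lower bound on the distance of the two states
  have hlow : (2 : ℝ) ≤ ‖ψ θ - ψ θ'‖ := by
    have hsq : ‖ψ θ - ψ θ'‖ ^ 2 = ‖ψ θ‖ ^ 2 - 2 * Complex.re (inner (𝕜 := ℂ) (ψ θ) (ψ θ'))
        + ‖ψ θ'‖ ^ 2 := norm_sub_sq (𝕜 := ℂ) _ _
    rw [hoverlap] at hsq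
    have hcs : (1 : ℝ) ≤ ‖ψ θ‖ * ‖ψ θ'‖ := by
      have := norm_inner_le_norm (𝕜 := ℂ) (ψ θ) (ψ θ')
      rw [hoverlap] at this
      simpa using this
    have hre : Complex.re (-1 : ℂ) = -1 := by simp
    rw [hre] at hsq
    nlinarith [norm_nonneg (ψ θ - ψ θ'), norm_nonneg (ψ θ), norm_nonneg (ψ θ'),
      sq_nonneg (‖ψ θ‖ - ‖ψ θ'‖)]
  linarith
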